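/- For any finite collection of points x_1,...,x_n in ℝ^d and real coefficients r_1,...,r_n with ∑ r_j = 0, the quadratic form ∑_{j,k} r_j r_k ‖x_j - x_k‖ is nonpositive. -/

import Mathlib

open MeasureTheory Real
open scoped RealInnerProductSpace
set_option maxHeartbeats 1000000


lemma indicator_int {M c : ℝ} (h1 : -M ≤ c) (h2 : c ≤ M) :
    ∫ u in (-M)..M, (Set.Iio c).indicator (fun _ => (1:ℝ)) u = c + M := by
  rw [intervalIntegral.integral_of_le (by linarith), MeasureTheory.integral_indicator measurableSet_Iio]
  rw [MeasureTheory.setIntegral_const, measureReal_def, Measure.restrict_apply measurableSet_Iio]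
  have : Set.Iio c ∩ Set.Ioc (-M) M = Set.Ioo (-M) c := by
    ext u; simp only [Set.mem_inter_iff, Set.mem_Iio, Set.mem_Ioc, Set.mem_Ioo]
    constructor
    · rintro ⟨h, h', _⟩; exact ⟨h', h⟩
    · rintro ⟨h, h'⟩; exact ⟨h', h, by linarith⟩
  rw [this, Real.volume_Ioo, ENNReal.toReal_ofReal (by linarith)]
  simp

lemma oneD {n : ℕ} (s r : Fin n → ℝ) (hr : ∑ j, r j = 0) :
    ∑ j, ∑ k, r j * r k * |s j - s k| ≤ 0 := by
  set M : ℝ := 1 + ∑ j, |s j| with hM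
  have hMs : ∀ j, -M ≤ s j ∧ s j ≤ M := by
    intro j
    have h1 : |s j| ≤ ∑ i, |s i| :=
      Finset.single_le_sum (f := fun i => |s i|) (fun i _ => abs_nonneg _) (Finset.mem_univ j)
    have h2 : ∑ i, |s i| ≥ 0 := Finset.sum_nonneg fun i _ => abs_nonneg _
    constructor <;> [nlinarith [abs_nonneg (s j), neg_abs_le (s j)]; nlinarith [le_abs_self (s j)]]
  have hMnn : -M ≤ M := by
    have h2 : ∑ i, |s i| ≥ 0 := Finset.sum_nonneg fun i _ => abs_nonneg _
    simp only [hM]; linarith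
  set f : Fin n → ℝ → ℝ := fun j => (Set.Iio (s j)).indicator (fun _ => (1:ℝ)) with hf
  have hfint : ∀ c : ℝ, IntervalIntegrable ((Set.Iio c).indicator (fun _ => (1:ℝ))) volume (-M) M := by
    intro c
    rw [intervalIntegrable_iff_integrableOn_Ioc_of_le hMnn]
    exact (integrableOn_const measure_Ioc_lt_top.ne).indicator measurableSet_Iio
  have hprod : ∀ j k (u : ℝ), f j u * f k u
      = (Set.Iio (min (s j) (s k))).indicator (fun _ => (1:ℝ)) u := by
    intro j k u
    simp only [hf, Set.indicator, Set.mem_Iio, lt_min_iff]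
    by_cases h1 : u < s j <;> by_cases h2 : u < s k <;> simp [h1, h2]
  -- min kernel positivity
  have hmin : 0 ≤ ∑ j, ∑ k, r j * r k * min (s j) (s k) := by
    have key : ∑ j, ∑ k, r j * r k * (min (s j) (s k) + M)
        = ∫ u in (-M)..M, (∑ j, r j * f j u)^2 := by
      have expand : ∀ u : ℝ, (∑ j, r j * f j u)^2
          = ∑ j, ∑ k, r j * r k * (Set.Iio (min (s j) (s k))).indicator (fun _ => (1:ℝ)) u := by
        intro u
        rw [sq, Finset.sum_mul_sum]
        refine Finset.sum_congr rfl fun j _ => Finset.sum_congr rfl fun k _ => ?_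
        rw [← hprod j k u]; ring
      have hint2 : ∀ j k : Fin n, IntervalIntegrable
          (fun u => r j * r k * (Set.Iio (min (s j) (s k))).indicator (fun _ => (1:ℝ)) u)
          volume (-M) M := fun j k => (hfint (min (s j) (s k))).const_mul (r j * r k)
      have hint3 : ∀ j : Fin n, IntervalIntegrable
          (fun u => ∑ k, r j * r k * (Set.Iio (min (s j) (s k))).indicator (fun _ => (1:ℝ)) u)
          volume (-M) M := by
        intro j
        have h := IntervalIntegrable.sum (μ := volume) (a := -M) (b := M)
          (f := fun k u => r j * r k * (Set.Iio (min (s j) (s k))).indicator (fun _ => (1:ℝ)) u)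
          Finset.univ (fun k _ => hint2 j k)
        have e : (∑ k : Fin n, fun u =>
            r j * r k * (Set.Iio (min (s j) (s k))).indicator (fun _ => (1:ℝ)) u)
            = fun u => ∑ k, r j * r k * (Set.Iio (min (s j) (s k))).indicator (fun _ => (1:ℝ)) u := by
          ext u; simp
        exact e ▸ h
      rw [intervalIntegral.integral_congr (fun u _ => expand u)]
      rw [intervalIntegral.integral_finset_sum
        (f := fun j u => ∑ k, r j * r k * (Set.Iio (min (s j) (s k))).indicator (fun _ => (1:ℝ)) u)
        (fun j _ => hint3 j)]
      refine Finset.sum_congr rfl fun j _ => ?_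
      rw [intervalIntegral.integral_finset_sum
        (f := fun k u => r j * r k * (Set.Iio (min (s j) (s k))).indicator (fun _ => (1:ℝ)) u)
        (fun k _ => hint2 j k)]
      refine Finset.sum_congr rfl fun k _ => ?_
      rw [intervalIntegral.integral_const_mul,
        indicator_int (le_min (hMs j).1 (hMs k).1) ((min_le_left _ _).trans (hMs j).2)]
    have pos : 0 ≤ ∫ u in (-M)..M, (∑ j, r j * f j u)^2 :=
      intervalIntegral.integral_nonneg hMnn (fun u _ => sq_nonneg _)
    have zero : ∑ j, ∑ k, r j * r k * M = 0 := by
      have ej : ∀ j : Fin n, ∑ k, r j * r k * M = r j * ((∑ k, r k) * M) := by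
        intro j
        rw [Finset.sum_mul, Finset.mul_sum]
        exact Finset.sum_congr rfl fun k _ => by ring
      simp only [ej, hr, zero_mul, mul_zero, Finset.sum_const_zero]
    have : ∑ j, ∑ k, r j * r k * (min (s j) (s k) + M)
        = (∑ j, ∑ k, r j * r k * min (s j) (s k)) + ∑ j, ∑ k, r j * r k * M := by
      rw [← Finset.sum_add_distrib]
      refine Finset.sum_congr rfl fun j _ => ?_
      rw [← Finset.sum_add_distrib]
      exact Finset.sum_congr rfl fun k _ => by ring
    rw [key] at this
    linarith [pos, zero, this.symm.le, this.le]
  -- |a - b| = a + b - 2 min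
  have habs : ∀ j k, |s j - s k| = s j + s k - 2 * min (s j) (s k) := by
    intro j k
    rcases le_total (s j) (s k) with h | h
    · rw [min_eq_left h, abs_of_nonpos (by linarith)]; ring
    · rw [min_eq_right h, abs_of_nonneg (by linarith)]; ring
  have hlin : ∑ j, ∑ k, r j * r k * (s j + s k) = 0 := by
    have e1 : ∀ j : Fin n, ∑ k, r j * r k * (s j + s k)
        = r j * s j * (∑ k, r k) + r j * (∑ k, r k * s k) := by
      intro j
      rw [Finset.mul_sum, Finset.mul_sum, ← Finset.sum_add_distrib]
      exact Finset.sum_congr rfl fun k _ => by ring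
    calc ∑ j, ∑ k, r j * r k * (s j + s k)
        = ∑ j, r j * (∑ k, r k * s k) := by simp [e1, hr]
      _ = (∑ j, r j) * (∑ k, r k * s k) := (Finset.sum_mul _ _ _).symm
      _ = 0 := by rw [hr]; ring
  calc ∑ j, ∑ k, r j * r k * |s j - s k|
      = ∑ j, ∑ k, (r j * r k * (s j + s k) - 2 * (r j * r k * min (s j) (s k))) := by
        refine Finset.sum_congr rfl fun j _ => Finset.sum_congr rfl fun k _ => ?_
        rw [habs]; ring
    _ = (∑ j, ∑ k, r j * r k * (s j + s k)) - 2 * ∑ j, ∑ k, r j * r k * min (s j) (s k) := by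
        rw [Finset.mul_sum, ← Finset.sum_sub_distrib]
        refine Finset.sum_congr rfl fun j _ => ?_
        rw [Finset.mul_sum, ← Finset.sum_sub_distrib]
    _ ≤ 0 := by rw [hlin]; linarith


noncomputable def gaussI (d : ℕ) (a : EuclideanSpace ℝ (Fin d)) : ℝ :=
  ∫ v : EuclideanSpace ℝ (Fin d), |⟪a, v⟫| * rexp (-‖v‖^2)

lemma gauss_exp_integrable (d : ℕ) :
    Integrable (fun v : EuclideanSpace ℝ (Fin d) => rexp (-(1/2) * ‖v‖^2)) := by
  have h := (GaussianFourier.integrable_cexp_neg_mul_sq_norm_add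
    (V := EuclideanSpace ℝ (Fin d)) (b := (1/2 : ℂ)) (by norm_num) 0
    (0 : EuclideanSpace ℝ (Fin d))).norm
  convert h using 2 with v
  simp [Complex.norm_exp]
  norm_cast

lemma gaussI_integrable (a : EuclideanSpace ℝ (Fin d)) :
    Integrable (fun v : EuclideanSpace ℝ (Fin d) => |⟪a, v⟫| * rexp (-‖v‖^2)) := by
  have hcont : Continuous (fun v : EuclideanSpace ℝ (Fin d) => |⟪a, v⟫| * rexp (-‖v‖^2)) := by
    have h1 : Continuous fun v : EuclideanSpace ℝ (Fin d) => (⟪a, v⟫ : ℝ) :=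
      continuous_const.inner continuous_id
    exact h1.abs.mul (Real.continuous_exp.comp (continuous_norm.pow 2).neg)
  refine Integrable.mono' ((gauss_exp_integrable d).const_mul ‖a‖)
    hcont.aestronglyMeasurable (Filter.Eventually.of_forall fun v => ?_)
  have h1 : |⟪a, v⟫| ≤ ‖a‖ * ‖v‖ := abs_real_inner_le_norm a v
  have h3 : ‖v‖ ≤ rexp ((1/2) * ‖v‖^2) := by
    have := Real.add_one_le_exp ((1/2) * ‖v‖^2)
    nlinarith [sq_nonneg (‖v‖ - 1)]
  have h2 : ‖v‖ * rexp (-((1/2) * ‖v‖^2)) ≤ 1 := by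
    calc ‖v‖ * rexp (-((1/2) * ‖v‖^2))
        ≤ rexp ((1/2) * ‖v‖^2) * rexp (-((1/2) * ‖v‖^2)) :=
          mul_le_mul_of_nonneg_right h3 (Real.exp_pos _).le
      _ = 1 := by rw [← Real.exp_add]; simp
  have e : rexp (-‖v‖^2) = rexp (-((1/2) * ‖v‖^2)) * rexp (-((1/2) * ‖v‖^2)) := by
    rw [← Real.exp_add]; ring_nf
  rw [Real.norm_eq_abs, abs_of_nonneg (by positivity), e]
  have h4 : (0:ℝ) ≤ rexp (-((1/2) * ‖v‖^2)) := (Real.exp_pos _).le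
  have h5 : rexp (-(1/2) * ‖v‖^2) = rexp (-((1/2) * ‖v‖^2)) := by ring_nf
  rw [h5]
  calc |⟪a, v⟫| * (rexp (-((1/2) * ‖v‖^2)) * rexp (-((1/2) * ‖v‖^2)))
      ≤ (‖a‖ * ‖v‖) * (rexp (-((1/2) * ‖v‖^2)) * rexp (-((1/2) * ‖v‖^2))) :=
        mul_le_mul_of_nonneg_right h1 (mul_nonneg h4 h4)
    _ = (‖a‖ * rexp (-((1/2) * ‖v‖^2))) * (‖v‖ * rexp (-((1/2) * ‖v‖^2))) := by ring
    _ ≤ (‖a‖ * rexp (-((1/2) * ‖v‖^2))) * 1 :=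
        mul_le_mul_of_nonneg_left h2 (mul_nonneg (norm_nonneg a) h4)
    _ = ‖a‖ * rexp (-((1/2) * ‖v‖^2)) := mul_one _

lemma gaussI_isometry (T : EuclideanSpace ℝ (Fin d) ≃ₗᵢ[ℝ] EuclideanSpace ℝ (Fin d))
    (a : EuclideanSpace ℝ (Fin d)) : gaussI d (T a) = gaussI d a := by
  unfold gaussI
  rw [← T.measurePreserving.integral_comp T.toHomeomorph.measurableEmbedding]
  congr 1 with v
  rw [T.inner_map_map, T.norm_map]

lemma gaussI_eq (e a : EuclideanSpace ℝ (Fin d)) (he : ‖e‖ = 1) :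
    gaussI d a = ‖a‖ * gaussI d e := by
  by_cases ha : a = 0
  · simp [ha, gaussI]
  · have hna : (0:ℝ) < ‖a‖ := norm_pos_iff.2 ha
    set u : EuclideanSpace ℝ (Fin d) := ‖a‖⁻¹ • a with hu
    have hnu : ‖u‖ = 1 := by
      rw [hu, norm_smul, norm_inv, norm_norm, inv_mul_cancel₀ hna.ne']
    have hue : gaussI d u = gaussI d e := by
      have hT := Submodule.reflection_sub (he.trans hnu.symm)
      rw [← hT]
      exact gaussI_isometry _ e
    have hau : a = ‖a‖ • u := by rw [hu, smul_smul, mul_inv_cancel₀ hna.ne', one_smul]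
    calc gaussI d a = ∫ v : EuclideanSpace ℝ (Fin d), |⟪(‖a‖ • u : EuclideanSpace ℝ (Fin d)), v⟫| * rexp (-‖v‖^2) := by
          rw [← hau]; rfl
      _ = ∫ v : EuclideanSpace ℝ (Fin d), ‖a‖ * (|⟪u, v⟫| * rexp (-‖v‖^2)) := by
          congr 1 with v
          rw [real_inner_smul_left, abs_mul, abs_of_nonneg hna.le]; ring
      _ = ‖a‖ * gaussI d u := integral_const_mul _ _
      _ = ‖a‖ * gaussI d e := by rw [hue]

lemma gaussI_pos (e : EuclideanSpace ℝ (Fin d)) (he : ‖e‖ = 1) : 0 < gaussI d e := by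
  unfold gaussI
  rw [integral_pos_iff_support_of_nonneg (fun v => by positivity) (gaussI_integrable e)]
  have hsub : {v : EuclideanSpace ℝ (Fin d) | (⟪e, v⟫ : ℝ) ≠ 0} ⊆
      Function.support fun v => |⟪e, v⟫| * rexp (-‖v‖^2) := by
    intro v hv
    simp only [Function.mem_support]
    have : |⟪e, v⟫| > 0 := abs_pos.2 hv
    positivity
  have hopen : IsOpen {v : EuclideanSpace ℝ (Fin d) | (⟪e, v⟫ : ℝ) ≠ 0} :=
    isOpen_ne.preimage (continuous_const.inner continuous_id)
  have hne : e ∈ {v : EuclideanSpace ℝ (Fin d) | (⟪e, v⟫ : ℝ) ≠ 0} := by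
    simp only [Set.mem_setOf_eq, real_inner_self_eq_norm_sq, he]
    norm_num
  calc (0:ENNReal) < volume {v : EuclideanSpace ℝ (Fin d) | (⟪e, v⟫ : ℝ) ≠ 0} :=
        hopen.measure_pos volume ⟨e, hne⟩
    _ ≤ volume (Function.support fun v => |⟪e, v⟫| * rexp (-‖v‖^2)) := measure_mono hsub


open scoped BigOperators

/-- The Euclidean distance kernel is negative definite: for points `x 1, ..., x n` in `ℝ^d`
and real coefficients `r 1, ..., r n` summing to zero, `∑_{j,k} r j * r k * ‖x j - x k‖ ≤ 0`. -/
theorem euclidean_distance_kernel_negative_definite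
    (d n : ℕ) (x : Fin n → EuclideanSpace ℝ (Fin d)) (r : Fin n → ℝ)
    (hr : ∑ j, r j = 0) :
    ∑ j, ∑ k, r j * r k * ‖x j - x k‖ ≤ 0 := by
  rcases Nat.eq_zero_or_pos d with hd | hd
  · subst hd
    have hz : ∀ j k : Fin n, ‖x j - x k‖ = 0 := by
      intro j k; rw [EuclideanSpace.norm_eq]; simp
    simp [hz]
  · set e : EuclideanSpace ℝ (Fin d) := EuclideanSpace.single (⟨0, hd⟩ : Fin d) (1:ℝ) with he'
    have he : ‖e‖ = 1 := by rw [he', EuclideanSpace.norm_single]; norm_num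
    have hc : 0 < gaussI d e := gaussI_pos e he
    set c := gaussI d e with hcdef
    set S := ∑ j, ∑ k, r j * r k * ‖x j - x k‖ with hS
    have key : S * c ≤ 0 := by
      have hrep : ∀ j k : Fin n, ‖x j - x k‖ * c
          = ∫ v : EuclideanSpace ℝ (Fin d), |⟪x j - x k, v⟫| * rexp (-‖v‖^2) :=
        fun j k => (gaussI_eq e (x j - x k) he).symm
      have hint : ∀ j k : Fin n, Integrable (fun v : EuclideanSpace ℝ (Fin d) =>
          r j * r k * (|⟪x j - x k, v⟫| * rexp (-‖v‖^2))) :=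
        fun j k => (gaussI_integrable (x j - x k)).const_mul _
      have hint3 : ∀ j : Fin n, Integrable (fun v : EuclideanSpace ℝ (Fin d) =>
          ∑ k, r j * r k * (|⟪x j - x k, v⟫| * rexp (-‖v‖^2))) :=
        fun j => integrable_finset_sum _ (fun k _ => hint j k)
      have e1 : S * c = ∑ j, ∑ k, ∫ v : EuclideanSpace ℝ (Fin d),
          r j * r k * (|⟪x j - x k, v⟫| * rexp (-‖v‖^2)) := by
        rw [hS, Finset.sum_mul]
        refine Finset.sum_congr rfl fun j _ => ?_
        rw [Finset.sum_mul]
        refine Finset.sum_congr rfl fun k _ => ?_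
        rw [integral_const_mul, ← hrep j k]
        ring
      have e2 : ∫ v : EuclideanSpace ℝ (Fin d),
          ∑ j, ∑ k, r j * r k * (|⟪x j - x k, v⟫| * rexp (-‖v‖^2))
          = ∑ j, ∑ k, ∫ v : EuclideanSpace ℝ (Fin d),
            r j * r k * (|⟪x j - x k, v⟫| * rexp (-‖v‖^2)) := by
        rw [integral_finset_sum _ (fun j _ => hint3 j)]
        exact Finset.sum_congr rfl fun j _ => integral_finset_sum _ (fun k _ => hint j k)
      have e3 : ∀ v : EuclideanSpace ℝ (Fin d),
          ∑ j, ∑ k, r j * r k * (|⟪x j - x k, v⟫| * rexp (-‖v‖^2)) ≤ 0 := by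
        intro v
        have h1 := oneD (fun j => (⟪x j, v⟫ : ℝ)) r hr
        have hw : (0:ℝ) ≤ rexp (-‖v‖^2) := (Real.exp_pos _).le
        have e4 : ∀ j k : Fin n, r j * r k * (|⟪x j - x k, v⟫| * rexp (-‖v‖^2))
            = (r j * r k * |(⟪x j, v⟫ : ℝ) - ⟪x k, v⟫|) * rexp (-‖v‖^2) := by
          intro j k; rw [inner_sub_left]; ring
        calc ∑ j, ∑ k, r j * r k * (|⟪x j - x k, v⟫| * rexp (-‖v‖^2))
            = (∑ j, ∑ k, r j * r k * |(⟪x j, v⟫ : ℝ) - ⟪x k, v⟫|) * rexp (-‖v‖^2) := by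
              rw [Finset.sum_mul]
              refine Finset.sum_congr rfl fun j _ => ?_
              rw [Finset.sum_mul]
              exact Finset.sum_congr rfl fun k _ => e4 j k
          _ ≤ 0 := mul_nonpos_iff.2 (Or.inr ⟨h1, hw⟩)
      rw [e1, ← e2]
      exact integral_nonpos e3
    nlinarith [hc, key]
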